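/- Let m ≥ 1 and y ∈ ℝ^m. Let y_{(1)} ≥ y_{(2)} ≥ ⋯ ≥ y_{(m)} be the entries of y sorted in nonincreasing order, let ρ = max{ i ∈ [m] : y_{(i)} − (1/i)(Σ_{j=1}^i y_{(j)} − 1) > 0 }, let λ = (1/ρ)(Σ_{i=1}^ρ y_{(i)} − 1), and define x* componentwise by x*_i = max(y_i − λ, 0). Then x* is the unique minimizer of (1/2)‖x − y‖² over x ∈ ℝ^m subject to x_i ≥ 0 for all i and Σ_{i=1}^m x_i = 1. -/

import Mathlib

/-- Correctness of the projection-onto-the-probability-simplex algorithm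
(Condat): given `y ∈ ℝ^m`, sort its entries nonincreasingly via a permutation
`σ`, compute `ρ` and `λ` as in the algorithm, and set `x*_i = max(y_i − λ, 0)`.
Then `x*` is the unique minimizer of `(1/2)‖x − y‖²` over the probability
simplex. -/
theorem simplex_projection_algorithm_correct
    (m : ℕ) (hm : 1 ≤ m) (y : Fin m → ℝ)
    (σ : Equiv.Perm (Fin m))
    (hsorted : ∀ i j : Fin m, i ≤ j → y (σ j) ≤ y (σ i))
    (ρ : Fin m)
    (hρmem : 0 < y (σ ρ) -
      (1 / ((ρ : ℕ) + 1 : ℝ)) * ((∑ j ∈ Finset.Iic ρ, y (σ j)) - 1))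
    (hρmax : ∀ i : Fin m,
      0 < y (σ i) - (1 / ((i : ℕ) + 1 : ℝ)) * ((∑ j ∈ Finset.Iic i, y (σ j)) - 1) →
        i ≤ ρ)
    (l : ℝ) (hl : l = (1 / ((ρ : ℕ) + 1 : ℝ)) * ((∑ i ∈ Finset.Iic ρ, y (σ i)) - 1))
    (xstar : Fin m → ℝ) (hx : ∀ i, xstar i = max (y i - l) 0) :
    ((∀ i, 0 ≤ xstar i) ∧ (∑ i, xstar i = 1) ∧
      (∀ z : Fin m → ℝ, (∀ i, 0 ≤ z i) → (∑ i, z i = 1) →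
        (1 / 2) * ∑ i, (xstar i - y i) ^ 2 ≤ (1 / 2) * ∑ i, (z i - y i) ^ 2)) ∧
    (∀ x : Fin m → ℝ, (∀ i, 0 ≤ x i) → (∑ i, x i = 1) →
      (∀ z : Fin m → ℝ, (∀ i, 0 ≤ z i) → (∑ i, z i = 1) →
        (1 / 2) * ∑ i, (x i - y i) ^ 2 ≤ (1 / 2) * ∑ i, (z i - y i) ^ 2) →
      x = xstar) := by
  have hρpos : (0:ℝ) < (ρ : ℕ) + 1 := by positivity
  -- (ρ+1) * l = S_ρ - 1
  have hlmul : ((ρ : ℕ) + 1 : ℝ) * l = (∑ i ∈ Finset.Iic ρ, y (σ i)) - 1 := by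
    rw [hl]; field_simp
  -- y(σ ρ) > l
  have hρgt : l < y (σ ρ) := by rw [hl]; linarith [hρmem]
  -- for i ≤ ρ, l < y(σ i)
  have hle_gt : ∀ i : Fin m, i ≤ ρ → l < y (σ i) := fun i hi =>
    lt_of_lt_of_le hρgt (hsorted i ρ hi)
  -- for i > ρ, y(σ i) ≤ l, by strong induction on i.val
  have key : ∀ n : ℕ, ∀ i : Fin m, (i : ℕ) = n → ρ < i → y (σ i) ≤ l := by
    intro n
    induction n using Nat.strong_induction_on with
    | _ n ih =>
      intro i hin hρi
      have hnot : ¬ (0 < y (σ i) - (1 / ((i : ℕ) + 1 : ℝ)) *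
          ((∑ j ∈ Finset.Iic i, y (σ j)) - 1)) := by
        intro h
        exact absurd (hρmax i h) (not_le.mpr hρi)
      have hipos : (0:ℝ) < (i : ℕ) + 1 := by positivity
      have hineq : ((i : ℕ) + 1 : ℝ) * y (σ i) ≤ (∑ j ∈ Finset.Iic i, y (σ j)) - 1 := by
        push_neg at hnot
        have h1 : y (σ i) ≤ (1 / ((i : ℕ) + 1 : ℝ)) *
            ((∑ j ∈ Finset.Iic i, y (σ j)) - 1) := by linarith
        calc ((i : ℕ) + 1 : ℝ) * y (σ i)
            ≤ ((i : ℕ) + 1 : ℝ) * ((1 / ((i : ℕ) + 1 : ℝ)) *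
              ((∑ j ∈ Finset.Iic i, y (σ j)) - 1)) := by
              exact mul_le_mul_of_nonneg_left h1 (le_of_lt hipos)
          _ = (∑ j ∈ Finset.Iic i, y (σ j)) - 1 := by field_simp
      -- split Iic i = Iic ρ ∪ Ioc ρ i
      have hsplit : Finset.Iic i = Finset.Iic ρ ∪ Finset.Ioc ρ i := by
        ext j
        simp only [Finset.mem_Iic, Finset.mem_union, Finset.mem_Ioc]
        constructor
        · intro hj
          rcases le_or_gt j ρ with h | h
          · exact Or.inl h
          · exact Or.inr ⟨h, hj⟩
        · rintro (h | ⟨_, h⟩)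
          · exact le_trans h (le_of_lt hρi)
          · exact h
      have hdisj : Disjoint (Finset.Iic ρ) (Finset.Ioc ρ i) := by
        rw [Finset.disjoint_left]
        intro j hj hj'
        simp only [Finset.mem_Iic] at hj
        simp only [Finset.mem_Ioc] at hj'
        exact absurd hj (not_le.mpr hj'.1)
      have hsum : ∑ j ∈ Finset.Iic i, y (σ j) =
          (∑ j ∈ Finset.Iic ρ, y (σ j)) + ∑ j ∈ Finset.Ioc ρ i, y (σ j) := by
        rw [hsplit, Finset.sum_union hdisj]
      -- Ioc ρ i = insert i (Ioo ρ i)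
      have hIoc : Finset.Ioc ρ i = insert i (Finset.Ioo ρ i) := (Finset.Ioo_insert_right hρi).symm
      have hnot_mem : i ∉ Finset.Ioo ρ i := by simp
      have hsum2 : ∑ j ∈ Finset.Ioc ρ i, y (σ j) =
          y (σ i) + ∑ j ∈ Finset.Ioo ρ i, y (σ j) := by
        rw [hIoc, Finset.sum_insert hnot_mem]
      -- bound sum over Ioo ρ i by card * l, using induction hypothesis
      have hbound : ∑ j ∈ Finset.Ioo ρ i, y (σ j) ≤ ((Finset.Ioo ρ i).card : ℝ) * l := by
        have := Finset.sum_le_card_nsmul (Finset.Ioo ρ i) (fun j => y (σ j)) l ?_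
        · simpa [nsmul_eq_mul] using this
        · intro j hj
          simp only [Finset.mem_Ioo] at hj
          have hjval : (j : ℕ) < n := by
            rw [← hin]; exact hj.2
          exact ih _ hjval j rfl hj.1
      have hcard : (Finset.Ioo ρ i).card = (i : ℕ) - (ρ : ℕ) - 1 := Fin.card_Ioo ρ i
      have hρi' : (ρ : ℕ) < (i : ℕ) := hρi
      have hcard' : ((Finset.Ioo ρ i).card : ℝ) = (i : ℕ) - (ρ : ℕ) - 1 := by
        rw [hcard]
        have : (ρ : ℕ) + 1 ≤ (i : ℕ) := hρi'
        push_cast [Nat.cast_sub (by omega : 1 ≤ (i:ℕ) - (ρ:ℕ)), Nat.cast_sub (le_of_lt hρi')]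
        ring
      have hipos' : (0:ℝ) < (i : ℕ) := by
        have : 1 ≤ (i : ℕ) := by omega
        exact_mod_cast this
      -- combine
      have : ((i : ℕ) + 1 : ℝ) * y (σ i) ≤
          (((ρ : ℕ) + 1 : ℝ) * l) + (((i : ℕ) : ℝ) - (ρ : ℕ) - 1) * l + y (σ i) := by
        rw [hlmul]
        calc ((i : ℕ) + 1 : ℝ) * y (σ i) ≤ (∑ j ∈ Finset.Iic i, y (σ j)) - 1 := hineq
          _ = (∑ j ∈ Finset.Iic ρ, y (σ j)) - 1 + (y (σ i) + ∑ j ∈ Finset.Ioo ρ i, y (σ j)) := by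
              rw [hsum, hsum2]; ring
          _ ≤ (∑ j ∈ Finset.Iic ρ, y (σ j)) - 1 + (y (σ i) + (((i : ℕ) : ℝ) - (ρ : ℕ) - 1) * l) := by
              rw [← hcard'] at *
              linarith [hbound]
          _ = (∑ j ∈ Finset.Iic ρ, y (σ j)) - 1 + (((i : ℕ) : ℝ) - (ρ : ℕ) - 1) * l + y (σ i) := by ring
      have hfin : ((i : ℕ) : ℝ) * y (σ i) ≤ ((i : ℕ) : ℝ) * l := by nlinarith
      exact le_of_mul_le_mul_left (by linarith) hipos'
  have hgt_le : ∀ i : Fin m, ρ < i → y (σ i) ≤ l := fun i hi => key (i : ℕ) i rfl hi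
  -- nonnegativity
  have hnn : ∀ i, 0 ≤ xstar i := fun i => by rw [hx i]; exact le_max_right _ _
  -- sum = 1
  have hsum1 : ∑ i, xstar i = 1 := by
    have hcomp : ∑ i, xstar (σ i) = ∑ i, xstar i := Equiv.sum_comp σ xstar
    rw [← hcomp]
    have hz : ∀ i ∈ Finset.univ, i ∉ Finset.Iic ρ → xstar (σ i) = 0 := by
      intro i _ hi
      simp only [Finset.mem_Iic, not_le] at hi
      rw [hx]
      have := hgt_le i hi
      simp [max_eq_right, sub_nonpos.mpr this]
    rw [← Finset.sum_subset (Finset.subset_univ (Finset.Iic ρ)) hz]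
    have : ∀ i ∈ Finset.Iic ρ, xstar (σ i) = y (σ i) - l := by
      intro i hi
      simp only [Finset.mem_Iic] at hi
      rw [hx]
      exact max_eq_left (le_of_lt (sub_pos.mpr (hle_gt i hi)))
    rw [Finset.sum_congr rfl this, Finset.sum_sub_distrib, Finset.sum_const, Fin.card_Iic,
      nsmul_eq_mul]
    push_cast
    linarith [hlmul]
  -- key variational inequality
  have hvar : ∀ z : Fin m → ℝ, (∀ i, 0 ≤ z i) → (∑ i, z i = 1) →
      0 ≤ ∑ i, (xstar i - y i) * (z i - xstar i) := by
    intro z hz hzs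
    have hterm : ∀ i ∈ Finset.univ, -l * (z i - xstar i) ≤ (xstar i - y i) * (z i - xstar i) := by
      intro i _
      rcases le_or_gt l (y i) with h | h
      · have : xstar i = y i - l := by rw [hx]; exact max_eq_left (by linarith)
        rw [this]; ring_nf; rfl
      · have hx0 : xstar i = 0 := by rw [hx]; exact max_eq_right (by linarith)
        rw [hx0]
        have := hz i
        nlinarith
    have h1 : ∑ i, -l * (z i - xstar i) ≤ ∑ i, (xstar i - y i) * (z i - xstar i) :=
      Finset.sum_le_sum hterm
    have h2 : ∑ i, -l * (z i - xstar i) = -l * ((∑ i, z i) - ∑ i, xstar i) := by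
      rw [← Finset.mul_sum, Finset.sum_sub_distrib]
    rw [h2, hzs, hsum1] at h1
    simpa using h1
  -- expansion identity
  have hexpand : ∀ z : Fin m → ℝ, ∑ i, (z i - y i) ^ 2 =
      ∑ i, (xstar i - y i) ^ 2 + ∑ i, (z i - xstar i) ^ 2 +
        2 * ∑ i, (xstar i - y i) * (z i - xstar i) := by
    intro z
    rw [Finset.mul_sum, ← Finset.sum_add_distrib, ← Finset.sum_add_distrib]
    apply Finset.sum_congr rfl
    intro i _
    ring
  have hopt : ∀ z : Fin m → ℝ, (∀ i, 0 ≤ z i) → (∑ i, z i = 1) →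
      (1 / 2) * ∑ i, (xstar i - y i) ^ 2 ≤ (1 / 2) * ∑ i, (z i - y i) ^ 2 := by
    intro z hz hzs
    have h1 := hvar z hz hzs
    have h2 := hexpand z
    have h3 : 0 ≤ ∑ i, (z i - xstar i) ^ 2 :=
      Finset.sum_nonneg fun i _ => sq_nonneg _
    linarith
  refine ⟨⟨hnn, hsum1, hopt⟩, ?_⟩
  intro x hxn hxs hxmin
  have h1 := hxmin xstar hnn hsum1
  have h2 := hopt x hxn hxs
  have heq : ∑ i, (x i - y i) ^ 2 = ∑ i, (xstar i - y i) ^ 2 := by linarith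
  have h3 := hvar x hxn hxs
  have h4 := hexpand x
  have h5 : ∑ i, (x i - xstar i) ^ 2 ≤ 0 := by linarith
  have h6 : ∀ i ∈ Finset.univ, (x i - xstar i) ^ 2 = 0 := by
    intro i hi
    have := Finset.sum_nonneg (fun j (_ : j ∈ Finset.univ) => sq_nonneg (x j - xstar j))
    have h7 : ∑ i, (x i - xstar i) ^ 2 = 0 := le_antisymm h5 this
    exact (Finset.sum_eq_zero_iff_of_nonneg (fun j _ => sq_nonneg _)).mp h7 i hi
  funext i
  have := h6 i (Finset.mem_univ i)
  have : x i - xstar i = 0 := by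
    exact pow_eq_zero_iff (n := 2) (by norm_num) |>.mp this
  linarith
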